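/- Let G be a 2-vertex-connected outerplanar graph with vertices 1,…,n in clockwise order on the outer face, and let i,j ∈ [n] with i ≠ j+1. Let f1 and f2 be the unique bounded faces containing the edges {i−1,i} and {j,j+1} respectively. Then the cut δ_G([i,j]) consists exactly of the edges {i−1,i}, {j,j+1}, and the edges of G corresponding to the edges of the unique path between f1 and f2 in the weak dual tree G*. -/

import Mathlib

open scoped Classical

/-- `x` lies strictly between `a` and `b` in the clockwise cyclic order of `Fin n`. -/
def btw {n : ℕ} (a x b : Fin n) : Prop :=
  (a < x ∧ x < b) ∨ (b < a ∧ (a < x ∨ x < b))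

/-- `z` is a chord of the `n`-gon: it joins two distinct, non-consecutive vertices. -/
def IsChordal (n : ℕ) [NeZero n] (z : Sym2 (Fin n)) : Prop :=
  ∃ a b : Fin n, z = s(a, b) ∧ a ≠ b ∧ b ≠ a + 1 ∧ a ≠ b + 1

/-- Two chords cross: their endpoints strictly interleave around the cycle. -/
def ChordCross {n : ℕ} (z w : Sym2 (Fin n)) : Prop :=
  ∃ a b c d : Fin n, z = s(a, b) ∧ w = s(c, d) ∧ _root_.btw a c b ∧ _root_.btw b d a

/-- A 2-vertex-connected outerplanar graph, encoded by its fixed outerplanar embedding: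
the outer (Hamiltonian) cycle `0,1,…,n-1` together with a set of pairwise noncrossing
chords. -/
structure OPGraph (n : ℕ) [NeZero n] where
  chords : Finset (Sym2 (Fin n))
  isChord : ∀ z ∈ chords, IsChordal n z
  noncross : ∀ z ∈ chords, ∀ w ∈ chords, ¬ ChordCross z w

/-- The edges of the outerplanar graph: the outer cycle edges together with the chords. -/
def OPGraph.edge {n : ℕ} [NeZero n] (Gp : OPGraph n) (z : Sym2 (Fin n)) : Prop :=
  (∃ a : Fin n, z = s(a, a + 1)) ∨ z ∈ Gp.chords

/-- `v` is the clockwise successor of `u` among the vertices of `F`. -/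
def succIn {n : ℕ} (F : Finset (Fin n)) (u v : Fin n) : Prop :=
  u ∈ F ∧ v ∈ F ∧ u ≠ v ∧ ∀ w ∈ F, ¬ _root_.btw u w v

/-- `z` is an edge of the boundary cycle of the vertex set `F`. -/
def BoundaryEdge {n : ℕ} (F : Finset (Fin n)) (z : Sym2 (Fin n)) : Prop :=
  ∃ u v : Fin n, z = s(u, v) ∧ succIn F u v

/-- `F` is the vertex set of a bounded face of the outerplanar graph `Gp`:
its cyclically consecutive pairs are edges of `Gp`, and `Gp` has no edge joining two
non-consecutive vertices of `F`. -/
def OPGraph.IsFace {n : ℕ} [NeZero n] (Gp : OPGraph n) (F : Finset (Fin n)) : Prop :=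
  3 ≤ F.card ∧
  (∀ u v : Fin n, succIn F u v → Gp.edge s(u, v)) ∧
  (∀ u ∈ F, ∀ v ∈ F, u ≠ v → Gp.edge s(u, v) → succIn F u v ∨ succIn F v u)

/-- The bounded faces of `Gp`. -/
def OPGraph.Face {n : ℕ} [NeZero n] (Gp : OPGraph n) := {F : Finset (Fin n) // Gp.IsFace F}

/-- The weak dual of `Gp`: vertices are the bounded faces, two faces being adjacent when they
share a chord of `Gp`. -/
def OPGraph.weakDual {n : ℕ} [NeZero n] (Gp : OPGraph n) : SimpleGraph Gp.Face :=
  SimpleGraph.fromRel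
    (fun F F' => ∃ z ∈ Gp.chords, BoundaryEdge F.1 z ∧ BoundaryEdge F'.1 z)


/-- The interval `[i,j]` of vertices going clockwise from `i` to `j` (wrapping around). -/
def interval {n : ℕ} (i j : Fin n) : Set (Fin n) := {k | (k - i).val ≤ (j - i).val}

/-- The cut `δ_G(S)`: all edges of `Gp` with exactly one endpoint in `S`. -/
def OPGraph.cut {n : ℕ} [NeZero n] (Gp : OPGraph n) (S : Set (Fin n)) : Set (Sym2 (Fin n)) :=
  {z | Gp.edge z ∧ ∃ u v : Fin n, z = s(u, v) ∧ u ∈ S ∧ v ∉ S}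

/-- The chords of `Gp` corresponding to the edges of a walk `p` in the weak dual. -/
def pathChords {n : ℕ} [NeZero n] (Gp : OPGraph n) {F1 F2 : Gp.Face}
    (p : Gp.weakDual.Walk F1 F2) : Set (Sym2 (Fin n)) :=
  {z | z ∈ Gp.chords ∧ ∃ F F' : Gp.Face,
    s(F, F') ∈ p.edges ∧ BoundaryEdge F.1 z ∧ BoundaryEdge F'.1 z}

set_option linter.unusedSectionVars false
set_option linter.unusedVariables false

namespace CutProof

variable {n : ℕ} [NeZero n]

lemma subval (a x : Fin n) :
    (x - a).val = if a.val ≤ x.val then x.val - a.val else x.val + n - a.val := by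
  have ha := a.isLt; have hx := x.isLt
  rw [Fin.sub_def]
  show (n - a.val + x.val) % n = _
  rcases le_or_gt a.val x.val with hc | hc
  · rw [if_pos hc]
    have h1 : n - a.val + x.val = (x.val - a.val) + n := by omega
    rw [h1, Nat.add_mod_right, Nat.mod_eq_of_lt (by omega)]
  · rw [if_neg (by omega), Nat.mod_eq_of_lt (by omega)]
    omega

/-- rewrite a difference relative to an origin `o`. -/
lemma vst (o x y : Fin n) :
    (y - x).val = if (x - o).val ≤ (y - o).val then (y - o).val - (x - o).val
      else (y - o).val + n - (x - o).val := by
  have h : y - x = (y - o) - (x - o) := by abel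
  rw [h, subval]

lemma btw_iff {a x b : Fin n} : _root_.btw a x b ↔ 0 < (x - a).val ∧ (x - a).val < (b - a).val := by
  have ha := a.isLt; have hx := x.isLt; have hb := b.isLt
  unfold _root_.btw
  simp only [Fin.lt_def, subval]
  split_ifs <;> omega

lemma pos_inj {o x y : Fin n} (h : (x - o).val = (y - o).val) : x = y := by
  have h2 : x - o = y - o := Fin.val_inj.mp h
  calc x = (x - o) + o := (sub_add_cancel x o).symm
    _ = (y - o) + o := by rw [h2]
    _ = y := sub_add_cancel y o

lemma pos_eq_zero {o x : Fin n} (h : (x - o).val = 0) : x = o := by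
  have : (x - o).val = (o - o).val := by rw [sub_self, h, Fin.val_zero]
  exact pos_inj this

lemma pos_ne_zero {o x : Fin n} (h : x ≠ o) : 0 < (x - o).val :=
  Nat.pos_of_ne_zero fun h0 => h (pos_eq_zero h0)

lemma two_le_n {a b : Fin n} (h : a ≠ b) : 2 ≤ n := by
  have ha := a.isLt; have hb := b.isLt
  by_contra hc
  exact h (Fin.val_inj.mp (by omega))

lemma val_one_of_two_le (h : 2 ≤ n) : (1 : Fin n).val = 1 := by
  rw [Fin.val_one']; exact Nat.mod_eq_of_lt (by omega)

lemma eq_add_one_iff {a b : Fin n} (h2 : 2 ≤ n) : b = a + 1 ↔ (b - a).val = 1 := by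
  constructor
  · rintro rfl
    have : a + 1 - a = 1 := by abel
    rw [this, val_one_of_two_le h2]
  · intro h
    have : (b - a).val = ((a + 1) - a).val := by
      rw [show a + 1 - a = 1 by abel, val_one_of_two_le h2, h]
    exact pos_inj (o := a) this
    
lemma pos_add_one {a x : Fin n} (h2 : 2 ≤ n) :
    (x + 1 - a).val = if (x - a).val + 1 = n then 0 else (x - a).val + 1 := by
  have h : x + 1 - a = (x - a) + 1 := by abel
  rw [h, Fin.val_add, val_one_of_two_le h2]
  have hx := (x - a).isLt
  rcases Nat.lt_or_ge ((x - a).val + 1) n with hc | hc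
  · rw [Nat.mod_eq_of_lt hc, if_neg (by omega)]
  · have he : (x - a).val + 1 = n := by omega
    rw [if_pos he, he, Nat.mod_self]

lemma pos_rev {a b : Fin n} (h : a ≠ b) : (a - b).val + (b - a).val = n := by
  have hv : a.val ≠ b.val := fun hh => h (Fin.val_inj.mp hh)
  have ha := a.isLt; have hb := b.isLt
  rw [subval, subval]
  split_ifs <;> omega

end CutProof


namespace CutProof

variable {n : ℕ} [NeZero n]

lemma exists_succ {F : Finset (Fin n)} {x : Fin n} (hx : x ∈ F) (h2 : 1 < F.card) :
    ∃ y, succIn F x y := by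
  have hne : (F.erase x).Nonempty := by
    rw [← Finset.card_pos, Finset.card_erase_of_mem hx]; omega
  obtain ⟨y, hy, hmin⟩ := Finset.exists_min_image (F.erase x) (fun y => (y - x).val) hne
  refine ⟨y, hx, Finset.mem_of_mem_erase hy, (Finset.ne_of_mem_erase hy).symm, ?_⟩
  intro w hw hbtw
  rw [btw_iff] at hbtw
  have hwx : w ≠ x := fun h => by
    subst h; rw [sub_self, Fin.val_zero] at hbtw; omega
  have := hmin w (Finset.mem_erase.2 ⟨hwx, hw⟩)
  omega

lemma exists_pred {F : Finset (Fin n)} {x : Fin n} (hx : x ∈ F) (h2 : 1 < F.card) :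
    ∃ d, succIn F d x := by
  have hne : (F.erase x).Nonempty := by
    rw [← Finset.card_pos, Finset.card_erase_of_mem hx]; omega
  obtain ⟨d, hd, hmin⟩ := Finset.exists_min_image (F.erase x) (fun d => (x - d).val) hne
  refine ⟨d, Finset.mem_of_mem_erase hd, hx, Finset.ne_of_mem_erase hd, ?_⟩
  intro w hw hbtw
  rw [btw_iff] at hbtw
  have hwx : w ≠ x := by
    intro h; rw [h] at hbtw; omega
  have hle := hmin w (Finset.mem_erase.2 ⟨hwx, hw⟩)
  rw [vst d w x, if_pos (le_of_lt hbtw.2)] at hle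
  omega

lemma succ_unique {F : Finset (Fin n)} {x y y' : Fin n}
    (h : succIn F x y) (h' : succIn F x y') : y = y' := by
  obtain ⟨hx, hy, hxy, h4⟩ := h
  obtain ⟨_, hy', hxy', h4'⟩ := h'
  rcases lt_trichotomy ((y - x).val) ((y' - x).val) with hc | hc | hc
  · exact absurd (btw_iff.2 ⟨pos_ne_zero hxy.symm, hc⟩) (fun hb => h4' y hy hb)
  · exact pos_inj hc
  · exact absurd (btw_iff.2 ⟨pos_ne_zero hxy'.symm, hc⟩) (fun hb => h4 y' hy' hb)

variable {Gp : OPGraph n}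

lemma chord_props {a b : Fin n} (hz : s(a,b) ∈ Gp.chords) :
    a ≠ b ∧ b ≠ a + 1 ∧ a ≠ b + 1 := by
  obtain ⟨a', b', he, h1, h2, h3⟩ := Gp.isChord _ hz
  rw [Sym2.eq_iff] at he
  rcases he with ⟨rfl, rfl⟩ | ⟨rfl, rfl⟩
  · exact ⟨h1, h2, h3⟩
  · exact ⟨h1.symm, h3, h2⟩

lemma chordB {a b : Fin n} (hz : s(a,b) ∈ Gp.chords) :
    2 ≤ (b - a).val ∧ (b - a).val ≤ n - 2 ∧ 4 ≤ n := by
  obtain ⟨h1, h2, h3⟩ := chord_props hz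
  have hn2 : 2 ≤ n := two_le_n h1
  have hB0 : 0 < (b - a).val := pos_ne_zero (Ne.symm h1)
  have hB1 : (b - a).val ≠ 1 := fun h => h2 ((eq_add_one_iff hn2).2 h)
  have hrev : (a - b).val + (b - a).val = n := pos_rev h1
  have hA1 : (a - b).val ≠ 1 := fun h => h3 ((eq_add_one_iff hn2).2 h)
  have hA0 : 0 < (a - b).val := pos_ne_zero h1
  omega

/-- `F` lies (weakly) inside the clockwise arc from `a` to `b`. -/
def Sd (a b : Fin n) (F : Finset (Fin n)) : Prop := ∀ x ∈ F, (x - a).val ≤ (b - a).val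

lemma succ_ba_to_Sd {F : Finset (Fin n)} {a b : Fin n} (hab : a ≠ b)
    (h : succIn F b a) : Sd a b F := by
  intro w hw
  by_contra hc
  refine h.2.2.2 w hw (btw_iff.2 ?_)
  push_neg at hc
  have hrev := pos_rev hab
  have hw1 : (w - b).val = (w - a).val - (b - a).val := by
    rw [vst a b w, if_pos (le_of_lt hc)]
  have ha1 : (a - b).val = n - (b - a).val := by omega
  have := (w - a).isLt
  constructor <;> omega

lemma Sd_both_absurd {F : Finset (Fin n)} {a b : Fin n} (hab : a ≠ b)
    (hcard : 3 ≤ F.card) (h1 : Sd a b F) (h2 : Sd b a F) : False := by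
  have hsub : F ⊆ {a, b} := by
    intro w hw
    have e1 := h1 w hw
    have e2 := h2 w hw
    have hrev := pos_rev hab
    have hblt := (b - a).isLt
    rw [vst a b w] at e2
    simp only [Finset.mem_insert, Finset.mem_singleton]
    split_ifs at e2 with hc
    · have : (w - a).val = (b - a).val := le_antisymm e1 hc
      exact Or.inr (pos_inj this)
    · have : (w - a).val = 0 := by omega
      exact Or.inl (pos_eq_zero this)
  have := Finset.card_le_card hsub
  have : F.card ≤ 2 := le_trans this (Finset.card_insert_le _ _ |>.trans (by simp))
  omega

end CutProof


namespace CutProof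

variable {n : ℕ} [NeZero n] {Gp : OPGraph n}

lemma succ_mono {F : Finset (Fin n)} {a b c x : Fin n}
    (hS : Sd a b F) (hb : b ∈ F) (hcb : c ≠ b) (h : succIn F c x) :
    (c - a).val < (x - a).val ∧ (x - a).val ≤ (b - a).val := by
  obtain ⟨hc, hx, hcx, h4⟩ := h
  have e1 : (x - a).val ≤ (b - a).val := hS x hx
  have ec : (c - a).val ≤ (b - a).val := hS c hc
  have hcb' : (c - a).val ≠ (b - a).val := fun h => hcb (pos_inj h)
  rcases lt_or_ge ((c - a).val) ((x - a).val) with hlt | hge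
  · exact ⟨hlt, e1⟩
  · exfalso
    have hne : (x - a).val ≠ (c - a).val := fun h => hcx (pos_inj h).symm
    refine h4 b hb (btw_iff.2 ?_)
    rw [vst a c b, if_pos ec, vst a c x, if_neg (by omega)]
    have h1 := (x - a).isLt
    have h2 := (b - a).isLt
    constructor <;> omega

lemma side_core {F : Finset (Fin n)} (hF : Gp.IsFace F) {a b : Fin n}
    (hz : s(a,b) ∈ Gp.chords) (hbF : b ∉ F) {u v : Fin n} (hu : u ∈ F) (hv : v ∈ F)
    (hu2 : 0 < (u - a).val ∧ (u - a).val < (b - a).val)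
    (hv2 : (b - a).val < (v - a).val) : False := by
  obtain ⟨hB2, hBn, hn4⟩ := chordB hz
  obtain ⟨hab, hab1, hab2⟩ := chord_props hz
  have hPne : (F.filter (fun w => (w - a).val ≤ (b - a).val)).Nonempty :=
    ⟨u, Finset.mem_filter.2 ⟨hu, le_of_lt hu2.2⟩⟩
  obtain ⟨x, hxP, hxmax⟩ := Finset.exists_max_image _ (fun w => (w - a).val) hPne
  obtain ⟨hxF, hxle⟩ := Finset.mem_filter.1 hxP
  have hxb : x ≠ b := fun h => hbF (h ▸ hxF)
  have hxltB : (x - a).val < (b - a).val := lt_of_le_of_ne hxle (fun h => hxb (pos_inj h))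
  have hxpos : 0 < (x - a).val :=
    lt_of_lt_of_le hu2.1 (hxmax u (Finset.mem_filter.2 ⟨hu, le_of_lt hu2.2⟩))
  obtain ⟨y, hsy⟩ := exists_succ hxF (by have := hF.1; omega)
  obtain ⟨hxF', hyF, hxy, h4⟩ := hsy
  rcases le_or_gt ((y - a).val) ((b - a).val) with hyB | hyB
  · have hyx : (y - a).val ≤ (x - a).val := hxmax y (Finset.mem_filter.2 ⟨hyF, hyB⟩)
    have hylt : (y - a).val < (x - a).val := lt_of_le_of_ne hyx (fun h => hxy (pos_inj h).symm)
    refine h4 v hv (btw_iff.2 ?_)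
    rw [vst a x v, if_pos (by omega), vst a x y, if_neg (by omega)]
    have hvlt := (v - a).isLt
    constructor <;> omega
  · have hedge : Gp.edge s(x, y) := hF.2.1 x y ⟨hxF, hyF, hxy, h4⟩
    rcases hedge with ⟨c, hc⟩ | hchord
    · rw [Sym2.eq_iff] at hc
      have h2n : 2 ≤ n := by omega
      rcases hc with ⟨hc1, hc2⟩ | ⟨hc1, hc2⟩
      · have hyx1 : y = x + 1 := by rw [hc2, ← hc1]
        have key := pos_add_one (a := a) (x := x) h2n
        rw [← hyx1] at key
        split_ifs at key <;> omega
      · have hxy1 : x = y + 1 := by rw [hc1, ← hc2]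
        have key := pos_add_one (a := a) (x := y) h2n
        rw [← hxy1] at key
        have := (y - a).isLt
        split_ifs at key <;> omega
    · refine Gp.noncross _ hz _ hchord
        ⟨a, b, x, y, rfl, rfl, btw_iff.2 ⟨hxpos, hxltB⟩, btw_iff.2 ?_⟩
      have hrev := pos_rev hab
      have ha1 : (a - b).val = n - (b - a).val := by omega
      rw [vst a b y, if_pos (le_of_lt hyB), ha1]
      have := (y - a).isLt
      constructor <;> omega

lemma face_side {F : Finset (Fin n)} (hF : Gp.IsFace F) {a b : Fin n}
    (hz : s(a,b) ∈ Gp.chords) : Sd a b F ∨ Sd b a F := by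
  obtain ⟨hab, hab1, hab2⟩ := chord_props hz
  have hrev := pos_rev hab
  by_contra hc
  push_neg at hc
  obtain ⟨h1, h2⟩ := hc
  unfold Sd at h1 h2; push_neg at h1 h2
  obtain ⟨p, hpF, hp⟩ := h1
  obtain ⟨q, hqF, hq⟩ := h2
  have hq' : 0 < (q - a).val ∧ (q - a).val < (b - a).val := by
    rw [vst a b q] at hq
    have := (q - a).isLt
    split_ifs at hq <;> omega
  by_cases hbF : b ∈ F
  · by_cases haF : a ∈ F
    · rcases hF.2.2 a haF b hbF hab (Or.inr hz) with hs | hs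
      · exact hs.2.2.2 q hqF (btw_iff.2 hq')
      · refine hs.2.2.2 p hpF (btw_iff.2 ?_)
        rw [vst a b p, if_pos (le_of_lt hp)]
        have hrev' : (a - b).val = n - (b - a).val := by omega
        rw [hrev']
        have := (p - a).isLt
        constructor <;> omega
    · have hz' : s(b,a) ∈ Gp.chords := by rwa [Sym2.eq_swap]
      have hp' : 0 < (p - b).val ∧ (p - b).val < (a - b).val := by
        rw [vst a b p, if_pos (le_of_lt hp)]
        have := (p - a).isLt
        constructor <;> omega
      have hq'' : (a - b).val < (q - b).val := by
        rw [vst a b q, if_neg (by omega)]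
        omega
      exact side_core hF hz' haF hpF hqF hp' hq''
  · exact side_core hF hz hbF hqF hpF hq' hp

end CutProof


namespace CutProof

variable {n : ℕ} [NeZero n] {Gp : OPGraph n}

lemma succ_b_a {F : Finset (Fin n)} {a b : Fin n} (hab : a ≠ b)
    (haF : a ∈ F) (hbF : b ∈ F) (hS : Sd a b F) : succIn F b a := by
  refine ⟨hbF, haF, hab.symm, fun w hw hb => ?_⟩
  rw [btw_iff] at hb
  have hS' := hS w hw
  have hrev := pos_rev hab
  rw [vst a b w] at hb
  split_ifs at hb <;> omega

lemma succ_agree_core {F F' : Finset (Fin n)} (hF : Gp.IsFace F) (hF' : Gp.IsFace F')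
    {a b : Fin n} (hz : s(a,b) ∈ Gp.chords)
    (haF : a ∈ F) (hbF : b ∈ F) (haF' : a ∈ F') (hbF' : b ∈ F')
    (hSF : Sd a b F) (hSF' : Sd a b F')
    {c x x' : Fin n} (hc' : c ∈ F') (hcb : c ≠ b)
    (hsx : succIn F c x) (hsx' : succIn F' c x')
    (hlt : (x' - a).val < (x - a).val) : False := by
  obtain ⟨hB2, hBn, hn4⟩ := chordB hz
  obtain ⟨hab, hab1, hab2⟩ := chord_props hz
  have hrev := pos_rev hab
  have hm := succ_mono hSF hbF hcb hsx
  have hm' := succ_mono hSF' hbF' hcb hsx'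
  have hedge : Gp.edge s(c, x) := hF.2.1 c x hsx
  have h2n : 2 ≤ n := by omega
  by_cases hxF' : x ∈ F'
  · rcases hF'.2.2 c hc' x hxF' hsx.2.2.1 hedge with hs | hs
    · refine hs.2.2.2 x' hsx'.2.1 (btw_iff.2 ?_)
      rw [vst a c x', if_pos (le_of_lt hm'.1), vst a c x, if_pos (le_of_lt hm.1)]
      constructor <;> omega
    · by_cases hxb : x = b
      · subst hxb
        have hba : succIn F' x a := succ_b_a hab haF' hbF' hSF'
        have hca : c = a := succ_unique hs hba
        subst hca
        have hSd2 : Sd x c F := by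
          intro w hw
          have h1 := hSF w hw
          have h2 := hsx.2.2.2 w hw
          rw [btw_iff] at h2
          rw [vst c x w]
          have hca' : (c - x).val = n - (x - c).val := by omega
          rw [hca']
          split_ifs <;> omega
        exact Sd_both_absurd hab hF.1 hSF hSd2
      · refine hs.2.2.2 b hbF' (btw_iff.2 ?_)
        have hxB : (x - a).val < (b - a).val := lt_of_le_of_ne hm.2 (fun h => hxb (pos_inj h))
        rw [vst a x b, if_pos hm.2, vst a x c, if_neg (by omega)]
        have := (b - a).isLt
        constructor <;> omega
  · have hPne : (F'.filter (fun w => (w - a).val < (x - a).val)).Nonempty :=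
      ⟨c, Finset.mem_filter.2 ⟨hc', hm.1⟩⟩
    obtain ⟨t1, ht1P, ht1max⟩ := Finset.exists_max_image _ (fun w => (w - a).val) hPne
    obtain ⟨ht1F, ht1lt⟩ := Finset.mem_filter.1 ht1P
    have ht1b : t1 ≠ b := by
      intro h; rw [h] at ht1lt; omega
    obtain ⟨t2, hst2⟩ := exists_succ ht1F (by have := hF'.1; omega)
    have hm2 := succ_mono hSF' hbF' ht1b hst2
    have ht2x : (x - a).val < (t2 - a).val := by
      rcases lt_trichotomy ((t2 - a).val) ((x - a).val) with hlt2 | heq | hgt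
      · have := ht1max t2 (Finset.mem_filter.2 ⟨hst2.2.1, hlt2⟩); omega
      · exact absurd (pos_inj heq) (fun h => hxF' (h ▸ hst2.2.1))
      · exact hgt
    have hct1 : (c - a).val ≤ (t1 - a).val := ht1max c (Finset.mem_filter.2 ⟨hc', hm.1⟩)
    have hct1' : (c - a).val < (t1 - a).val := by
      rcases lt_or_eq_of_le hct1 with h | h
      · exact h
      · exfalso
        have hceq : c = t1 := pos_inj h
        rw [← hceq] at hst2
        have h2 : t2 = x' := succ_unique hst2 hsx'
        rw [h2] at ht2x
        omega
    have hcx_chord : s(c, x) ∈ Gp.chords := by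
      rcases hedge with ⟨d, hd⟩ | h
      · exfalso
        rw [Sym2.eq_iff] at hd
        rcases hd with ⟨hd1, hd2⟩ | ⟨hd1, hd2⟩
        · have h1 : x = c + 1 := by rw [hd2, ← hd1]
          have key := pos_add_one (a := a) (x := c) h2n
          rw [← h1] at key
          split_ifs at key <;> omega
        · have h1 : c = x + 1 := by rw [hd1, ← hd2]
          have key := pos_add_one (a := a) (x := x) h2n
          rw [← h1] at key
          split_ifs at key <;> omega
      · exact h
    have hedge2 : Gp.edge s(t1, t2) := hF'.2.1 t1 t2 hst2
    have ht_chord : s(t1, t2) ∈ Gp.chords := by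
      rcases hedge2 with ⟨d, hd⟩ | h
      · exfalso
        rw [Sym2.eq_iff] at hd
        rcases hd with ⟨hd1, hd2⟩ | ⟨hd1, hd2⟩
        · have h1 : t2 = t1 + 1 := by rw [hd2, ← hd1]
          have key := pos_add_one (a := a) (x := t1) h2n
          rw [← h1] at key
          split_ifs at key <;> omega
        · have h1 : t1 = t2 + 1 := by rw [hd1, ← hd2]
          have key := pos_add_one (a := a) (x := t2) h2n
          rw [← h1] at key
          split_ifs at key <;> omega
      · exact h
    refine Gp.noncross _ hcx_chord _ ht_chord
      ⟨c, x, t1, t2, rfl, rfl, btw_iff.2 ?_, btw_iff.2 ?_⟩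
    · rw [vst a c t1, if_pos (le_of_lt hct1'), vst a c x, if_pos (le_of_lt hm.1)]
      constructor <;> omega
    · rw [vst a x t2, if_pos (le_of_lt ht2x), vst a x c, if_neg (by omega)]
      have := (t2 - a).isLt
      constructor <;> omega

lemma succ_agree {F F' : Finset (Fin n)} (hF : Gp.IsFace F) (hF' : Gp.IsFace F')
    {a b : Fin n} (hz : s(a,b) ∈ Gp.chords)
    (haF : a ∈ F) (hbF : b ∈ F) (haF' : a ∈ F') (hbF' : b ∈ F')
    (hSF : Sd a b F) (hSF' : Sd a b F')
    {c x x' : Fin n} (hc' : c ∈ F') (hcb : c ≠ b)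
    (hsx : succIn F c x) (hsx' : succIn F' c x') : x = x' := by
  rcases lt_trichotomy ((x' - a).val) ((x - a).val) with h | h | h
  · exact absurd (succ_agree_core hF hF' hz haF hbF haF' hbF' hSF hSF' hc' hcb hsx hsx' h) id
  · exact (pos_inj h).symm
  · exact absurd (succ_agree_core hF' hF hz haF' hbF' haF hbF hSF' hSF hsx.1 hcb hsx' hsx h) id

lemma face_unique_mem {F F' : Finset (Fin n)} (hF : Gp.IsFace F) (hF' : Gp.IsFace F')
    {a b : Fin n} (hz : s(a,b) ∈ Gp.chords)
    (haF : a ∈ F) (hbF : b ∈ F) (haF' : a ∈ F') (hbF' : b ∈ F')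
    (hSF : Sd a b F) (hSF' : Sd a b F') :
    ∀ k : ℕ, ∀ c : Fin n, (c - a).val ≤ k → c ∈ F → c ∈ F' := by
  intro k
  induction k with
  | zero =>
    intro c hc hcF
    have : c = a := pos_eq_zero (Nat.le_zero.1 hc)
    exact this ▸ haF'
  | succ k ih =>
    intro c hc hcF
    rcases Nat.lt_or_ge ((c - a).val) (k+1) with h | h
    · exact ih c (by omega) hcF
    have hpos : 0 < (c - a).val := by omega
    obtain ⟨d, hsd⟩ := exists_pred hcF (by have := hF.1; omega)
    have hdlt : (d - a).val < (c - a).val := by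
      rcases lt_or_ge ((d - a).val) ((c - a).val) with h1 | h1
      · exact h1
      · exfalso
        have hdc : d ≠ c := hsd.2.2.1
        have hdne : (d - a).val ≠ (c - a).val := fun hh => hdc (pos_inj hh)
        have ha0 : (a - a).val = 0 := by rw [sub_self, Fin.val_zero]
        refine hsd.2.2.2 a haF (btw_iff.2 ?_)
        rw [vst a d a, ha0, if_neg (by omega), vst a d c, if_neg (by omega)]
        have := (d - a).isLt
        constructor <;> omega
    have hdF' : d ∈ F' := ih d (by omega) hsd.1
    have hdb : d ≠ b := by
      intro h0; rw [h0] at hdlt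
      have := hSF c hcF; omega
    obtain ⟨x', hsx'⟩ := exists_succ hdF' (by have := hF'.1; omega)
    have hagree := succ_agree hF hF' hz haF hbF haF' hbF' hSF hSF' hdF' hdb hsd hsx'
    rw [← hagree] at hsx'
    exact hsx'.2.1

lemma face_unique {F F' : Finset (Fin n)} (hF : Gp.IsFace F) (hF' : Gp.IsFace F')
    {a b : Fin n} (hz : s(a,b) ∈ Gp.chords)
    (haF : a ∈ F) (hbF : b ∈ F) (haF' : a ∈ F') (hbF' : b ∈ F')
    (hSF : Sd a b F) (hSF' : Sd a b F') : F = F' :=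
  Finset.Subset.antisymm
    (fun c hc => face_unique_mem hF hF' hz haF hbF haF' hbF' hSF hSF' n c
      (by have := (c - a).isLt; omega) hc)
    (fun c hc => face_unique_mem hF' hF hz haF' hbF' haF hbF hSF' hSF n c
      (by have := (c - a).isLt; omega) hc)

end CutProof


namespace CutProof

variable {n : ℕ} [NeZero n] {Gp : OPGraph n}

lemma bd_cases {F : Finset (Fin n)} {a b : Fin n} (h : BoundaryEdge F s(a,b)) :
    succIn F a b ∨ succIn F b a := by
  obtain ⟨u, v, he, hs⟩ := h
  rw [Sym2.eq_iff] at he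
  rcases he with ⟨rfl, rfl⟩ | ⟨rfl, rfl⟩
  · exact Or.inl hs
  · exact Or.inr hs

lemma bd_mems {F : Finset (Fin n)} {c d : Fin n} (h : BoundaryEdge F s(c,d)) :
    c ∈ F ∧ d ∈ F := by
  rcases bd_cases h with hs | hs
  · exact ⟨hs.1, hs.2.1⟩
  · exact ⟨hs.2.1, hs.1⟩

lemma bd_side {F : Finset (Fin n)} {a b : Fin n} (hab : a ≠ b) (h : BoundaryEdge F s(a,b)) :
    a ∈ F ∧ b ∈ F ∧ (Sd a b F ∨ Sd b a F) := by
  rcases bd_cases h with hs | hs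
  · exact ⟨hs.1, hs.2.1, Or.inr (succ_ba_to_Sd hab.symm hs)⟩
  · exact ⟨hs.2.1, hs.1, Or.inl (succ_ba_to_Sd hab hs)⟩

lemma bd_same_side_eq {F G : Gp.Face} {a b : Fin n} (hz : s(a,b) ∈ Gp.chords)
    (h1 : BoundaryEdge F.1 s(a,b)) (h3 : BoundaryEdge G.1 s(a,b))
    (s1 : Sd a b F.1) (s3 : Sd a b G.1) : F = G := by
  obtain ⟨hab, _, _⟩ := chord_props hz
  obtain ⟨ha1, hb1, _⟩ := bd_side hab h1
  obtain ⟨ha3, hb3, _⟩ := bd_side hab h3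
  exact Subtype.ext (face_unique F.2 G.2 hz ha1 hb1 ha3 hb3 s1 s3)

lemma bd_pair {F F' G : Gp.Face} (hne : F ≠ F') {a b : Fin n} (hz : s(a,b) ∈ Gp.chords)
    (h1 : BoundaryEdge F.1 s(a,b)) (h2 : BoundaryEdge F'.1 s(a,b))
    (h3 : BoundaryEdge G.1 s(a,b)) : G = F ∨ G = F' := by
  obtain ⟨hab, _, _⟩ := chord_props hz
  have hz' : s(b,a) ∈ Gp.chords := by rwa [Sym2.eq_swap]
  have hsw : (s(a,b) : Sym2 (Fin n)) = s(b,a) := (Sym2.eq_swap).symm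
  have hs1 := (bd_side hab h1).2.2
  have hs2 := (bd_side hab h2).2.2
  have hs3 := (bd_side hab h3).2.2
  rcases hs3 with s3 | s3
  · rcases hs1 with s1 | s1
    · exact Or.inl ((bd_same_side_eq hz h1 h3 s1 s3).symm)
    · rcases hs2 with s2 | s2
      · exact Or.inr ((bd_same_side_eq hz h2 h3 s2 s3).symm)
      · exact absurd (bd_same_side_eq hz' (hsw ▸ h1) (hsw ▸ h2) s1 s2) hne
  · rcases hs1 with s1 | s1
    · rcases hs2 with s2 | s2
      · exact absurd (bd_same_side_eq hz h1 h2 s1 s2) hne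
      · exact Or.inr ((bd_same_side_eq hz' (hsw ▸ h2) (hsw ▸ h3) s2 s3).symm)
    · exact Or.inl ((bd_same_side_eq hz' (hsw ▸ h1) (hsw ▸ h3) s1 s3).symm)

lemma shared_opposite {F F' : Gp.Face} (hne : F ≠ F') {a b : Fin n} (hz : s(a,b) ∈ Gp.chords)
    (h1 : BoundaryEdge F.1 s(a,b)) (h2 : BoundaryEdge F'.1 s(a,b)) :
    (Sd a b F.1 ↔ ¬ Sd a b F'.1) := by
  obtain ⟨hab, _, _⟩ := chord_props hz
  have hs1 := (bd_side hab h1).2.2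
  have hs2 := (bd_side hab h2).2.2
  constructor
  · intro s1 s2
    exact hne (bd_same_side_eq hz h1 h2 s1 s2)
  · intro hns2
    rcases hs1 with s1 | s1
    · exact s1
    · exfalso
      rcases hs2 with s2 | s2
      · exact hns2 s2
      · have hz' : s(b,a) ∈ Gp.chords := by rwa [Sym2.eq_swap]
        have hsw : (s(a,b) : Sym2 (Fin n)) = s(b,a) := (Sym2.eq_swap).symm
        exact hne (bd_same_side_eq hz' (hsw ▸ h1) (hsw ▸ h2) s1 s2)

lemma mem_both_arcs {a b c : Fin n} (hab : a ≠ b)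
    (h1 : (c - a).val ≤ (b - a).val) (h2 : (c - b).val ≤ (a - b).val) : c = a ∨ c = b := by
  have hrev := pos_rev hab
  rw [vst a b c] at h2
  split_ifs at h2 with hc
  · right; exact pos_inj (le_antisymm h1 hc)
  · left; exact pos_eq_zero (by omega)

lemma not_shared_same_side {F F' : Gp.Face} {a b : Fin n} (hz : s(a,b) ∈ Gp.chords)
    {w : Sym2 (Fin n)} (hw : w ∈ Gp.chords) (hwz : w ≠ s(a,b))
    (hbF : BoundaryEdge F.1 w) (hbF' : BoundaryEdge F'.1 w) :
    (Sd a b F.1 ↔ Sd a b F'.1) := by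
  obtain ⟨hab, _, _⟩ := chord_props hz
  obtain ⟨c, d, rfl, hcd, _, _⟩ := Gp.isChord w hw
  have hmF := bd_mems hbF
  have hmF' := bd_mems hbF'
  have key : ∀ (H H' : Gp.Face), Sd a b H.1 → Sd b a H'.1 →
      c ∈ H.1 → d ∈ H.1 → c ∈ H'.1 → d ∈ H'.1 → False := by
    intro H H' s1 s2 hc hd hc' hd'
    have hcab : c = a ∨ c = b := mem_both_arcs hab (s1 c hc) (s2 c hc')
    have hdab : d = a ∨ d = b := mem_both_arcs hab (s1 d hd) (s2 d hd')
    apply hwz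
    rcases hcab with rfl | rfl <;> rcases hdab with rfl | rfl
    · exact absurd rfl hcd
    · rfl
    · exact Sym2.eq_swap
    · exact absurd rfl hcd
  rcases face_side F.2 hz with s1 | s1 <;> rcases face_side F'.2 hz with s2 | s2
  · exact iff_of_true s1 s2
  · exact absurd (key F F' s1 s2 hmF.1 hmF.2 hmF'.1 hmF'.2) id
  · exact absurd (key F' F s2 s1 hmF'.1 hmF'.2 hmF.1 hmF.2) id
  · exact iff_of_false (fun hcon => Sd_both_absurd hab F.2.1 hcon s1)
      (fun hcon => Sd_both_absurd hab F'.2.1 hcon s2)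

lemma parity {a b : Fin n} (hz : s(a,b) ∈ Gp.chords) {F G : Gp.Face}
    (q : Gp.weakDual.Walk F G) :
    q.IsPath → ((Sd a b F.1 ↔ Sd a b G.1) ↔ s(a,b) ∉ pathChords Gp q) := by
  induction q with
  | nil =>
    intro _
    have hnm : s(a,b) ∉ pathChords Gp (SimpleGraph.Walk.nil (u := F)) := by
      rintro ⟨h1, G1, G2, h3, h4, h5⟩
      simp [SimpleGraph.Walk.edges_nil] at h3
    exact iff_of_true Iff.rfl hnm
  | @cons F F₁ G h q ih =>
    intro hp
    have hq : q.IsPath := hp.of_cons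
    have hiH := ih hq
    have hne : F ≠ F₁ := h.ne
    by_cases hsh : BoundaryEdge F.1 s(a,b) ∧ BoundaryEdge F₁.1 s(a,b)
    · have hopp := shared_opposite hne hz hsh.1 hsh.2
      have hmem : s(a,b) ∈ pathChords Gp (SimpleGraph.Walk.cons h q) :=
        ⟨hz, F, F₁, by rw [SimpleGraph.Walk.edges_cons]; exact List.mem_cons_self,
          hsh.1, hsh.2⟩
      have hnotq : s(a,b) ∉ pathChords Gp q := by
        rintro ⟨_, G1, G2, hmemq, hb1, hb2⟩
        have hadj : Gp.weakDual.Adj G1 G2 := q.adj_of_mem_edges hmemq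
        have hne12 : G1 ≠ G2 := hadj.ne
        have e1 := bd_pair hne hz hsh.1 hsh.2 hb1
        have e2 := bd_pair hne hz hsh.1 hsh.2 hb2
        have hedge_eq : s(G1, G2) = s(F, F₁) := by
          rcases e1 with rfl | rfl <;> rcases e2 with rfl | rfl
          · exact absurd rfl hne12
          · rfl
          · exact Sym2.eq_swap
          · exact absurd rfl hne12
        have hmem2 : s(F, F₁) ∈ q.edges := hedge_eq ▸ hmemq
        have hnodup := hp.isTrail.edges_nodup
        rw [SimpleGraph.Walk.edges_cons] at hnodup
        exact (List.nodup_cons.1 hnodup).1 hmem2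
      have h1 : Sd a b F₁.1 ↔ Sd a b G.1 := hiH.2 hnotq
      refine iff_of_false ?_ (fun hcon => hcon hmem)
      intro hFG
      tauto
    · have hiff : Sd a b F.1 ↔ Sd a b F₁.1 := by
        have hrel := (SimpleGraph.fromRel_adj _ F F₁).1 h
        obtain ⟨-, hrel⟩ := hrel
        rcases hrel with ⟨w, hw, hbF, hbF1⟩ | ⟨w, hw, hbF1, hbF⟩ <;>
        · have hwz : w ≠ s(a,b) := fun hh => hsh ⟨hh ▸ hbF, hh ▸ hbF1⟩
          exact not_shared_same_side hz hw hwz hbF hbF1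
      have hpc : s(a,b) ∈ pathChords Gp (SimpleGraph.Walk.cons h q) ↔
          s(a,b) ∈ pathChords Gp q := by
        constructor
        · rintro ⟨h1, G1, G2, hmemc, hb1, hb2⟩
          rw [SimpleGraph.Walk.edges_cons, List.mem_cons] at hmemc
          rcases hmemc with he | hmemc
          · exfalso
            rw [Sym2.eq_iff] at he
            rcases he with ⟨rfl, rfl⟩ | ⟨rfl, rfl⟩
            · exact hsh ⟨hb1, hb2⟩
            · exact hsh ⟨hb2, hb1⟩
          · exact ⟨h1, G1, G2, hmemc, hb1, hb2⟩
        · rintro ⟨h1, G1, G2, hmemc, hb1, hb2⟩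
          exact ⟨h1, G1, G2,
            by rw [SimpleGraph.Walk.edges_cons]; exact List.mem_cons_of_mem _ hmemc, hb1, hb2⟩
      constructor
      · intro hFG
        rw [hpc]
        exact hiH.1 (by tauto)
      · intro hnc
        have := hiH.2 (fun hmemq => hnc (hpc.2 hmemq))
        tauto

end CutProof


namespace CutProof

variable {n : ℕ} [NeZero n] {Gp : OPGraph n}

lemma neg_one_val (h2 : 2 ≤ n) (i : Fin n) : ((i - 1) - i).val = n - 1 := by
  have h : (i - 1) - i = (0 : Fin n) - 1 := by abel
  rw [h, subval, Fin.val_zero, val_one_of_two_le h2, if_neg (by omega)]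
  omega

lemma side_of_outer {F : Finset (Fin n)} (hF : Gp.IsFace F) {c : Fin n}
    (hbd : BoundaryEdge F s(c, c+1)) {a b : Fin n} (hz : s(a,b) ∈ Gp.chords) :
    (Sd a b F ↔ (c - a).val < (b - a).val) := by
  obtain ⟨hB2, hBn, hn4⟩ := chordB hz
  obtain ⟨hab, _, _⟩ := chord_props hz
  have h2n : 2 ≤ n := by omega
  have hrev := pos_rev hab
  have hcF : c ∈ F := (bd_mems hbd).1
  have hc1F : c + 1 ∈ F := (bd_mems hbd).2
  have key := pos_add_one (a := a) (x := c) h2n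
  rcases face_side hF hz with hs | hs
  · have e1 := hs c hcF
    have e2 := hs (c+1) hc1F
    refine iff_of_true hs ?_
    split_ifs at key <;> omega
  · have e1 := hs c hcF
    have e2 := hs (c+1) hc1F
    refine iff_of_false (fun hcon => Sd_both_absurd hab hF.1 hcon hs) ?_
    intro hlt
    rw [vst a b c] at e1
    rw [vst a b (c+1)] at e2
    have hc1 := ((c+1) - a).isLt
    split_ifs at e1 e2 key <;> omega

lemma cut_gap {a b i j : Fin n} (hz : s(a,b) ∈ Gp.chords) (hJ : (j - i).val ≠ n - 1) :
    ((a ∈ interval i j ∧ b ∉ interval i j) ∨ (b ∈ interval i j ∧ a ∉ interval i j)) ↔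
    ¬( ((i - 1 - a).val < (b - a).val) ↔ ((j - a).val < (b - a).val) ) := by
  obtain ⟨hB2, hBn, hn4⟩ := chordB hz
  obtain ⟨hab, _, _⟩ := chord_props hz
  have h2n : 2 ≤ n := by omega
  have habv : (a - i).val ≠ (b - i).val := fun h => hab (pos_inj h)
  have hm1 := neg_one_val h2n i
  have hA := (a - i).isLt
  have hB := (b - i).isLt
  have hJlt := (j - i).isLt
  have h1 : (i - 1 - a).val =
      if (a - i).val ≤ ((i - 1) - i).val then ((i-1) - i).val - (a - i).val
      else ((i-1) - i).val + n - (a - i).val := vst i a (i - 1)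
  rw [hm1] at h1
  have h2 : (b - a).val = if (a - i).val ≤ (b - i).val then (b - i).val - (a - i).val
      else (b - i).val + n - (a - i).val := vst i a b
  have h3 : (j - a).val = if (a - i).val ≤ (j - i).val then (j - i).val - (a - i).val
      else (j - i).val + n - (a - i).val := vst i a j
  simp only [interval, Set.mem_setOf_eq]
  rw [h1, h2, h3]
  rw [h2] at hB2 hBn
  split_ifs <;> omega

end CutProof

open CutProof

/-- **Lemma (structure of interval cuts in outerplanar graphs).**
For `i ≠ j+1`, let `f1`, `f2` be the (unique) bounded faces of `Gp` containing the outer edges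
`{i-1,i}` and `{j,j+1}` respectively.  Then `δ_G([i,j])` consists exactly of `{i-1,i}`,
`{j,j+1}`, and the chords corresponding to the edges of the (unique) path between `f1` and `f2`
in the weak dual tree. -/
theorem stmt_4 (n : ℕ) [NeZero n] (hn : 3 ≤ n) (Gp : OPGraph n)
    (i j : Fin n) (hij : i ≠ j + 1)
    (F1 F2 : Gp.Face)
    (hF1 : BoundaryEdge F1.1 s(i - 1, i)) (hF2 : BoundaryEdge F2.1 s(j, j + 1))
    (p : Gp.weakDual.Walk F1 F2) (hp : p.IsPath) :
    Gp.cut (interval i j) = {s(i - 1, i), s(j, j + 1)} ∪ pathChords Gp p := by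
  have h2n : 2 ≤ n := by omega
  have hii : (i - 1) + 1 = i := sub_add_cancel i 1
  have hm1 := neg_one_val h2n i
  have hJlt := (j - i).isLt
  have hJ : (j - i).val ≠ n - 1 := by
    intro hval
    apply hij
    have hj1 : j = i - 1 := pos_inj (o := i) (by rw [hval, hm1])
    rw [hj1, hii]
  have hF1' : BoundaryEdge F1.1 s(i - 1, (i - 1) + 1) := by rw [hii]; exact hF1
  -- gap ↔ side translations
  have side1 : ∀ {a b : Fin n}, s(a,b) ∈ Gp.chords →
      (Sd a b F1.1 ↔ ((i - 1) - a).val < (b - a).val) :=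
    fun hz => side_of_outer F1.2 hF1' hz
  have side2 : ∀ {a b : Fin n}, s(a,b) ∈ Gp.chords →
      (Sd a b F2.1 ↔ (j - a).val < (b - a).val) :=
    fun hz => side_of_outer F2.2 hF2 hz
  apply Set.eq_of_subset_of_subset
  · rintro z ⟨hedge, u, v, rfl, huS, hvS⟩
    rw [Set.mem_union, Set.mem_insert_iff, Set.mem_singleton_iff]
    rcases hedge with ⟨c, hc⟩ | hchord
    · left
      rw [Sym2.eq_iff] at hc
      have key := pos_add_one (a := i) (x := c) h2n
      simp only [interval, Set.mem_setOf_eq] at huS hvS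
      rcases hc with ⟨hu, hv⟩ | ⟨hu, hv⟩
      · right
        rw [hu] at huS; rw [hv] at hvS
        have hcj : (c - i).val = (j - i).val := by split_ifs at key <;> omega
        rw [hu, hv, pos_inj hcj]
      · left
        rw [hu] at huS; rw [hv] at hvS
        have hci : (c - i).val = ((i-1) - i).val := by
          rw [hm1]; split_ifs at key <;> omega
        rw [hu, hv, pos_inj hci, hii]
        exact Sym2.eq_swap
    · right
      have hone : (u ∈ interval i j ∧ v ∉ interval i j) ∨
          (v ∈ interval i j ∧ u ∉ interval i j) := Or.inl ⟨huS, hvS⟩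
      have hgap := (cut_gap hchord hJ).1 hone
      have hpar := parity hchord p hp
      have hs1 := side1 hchord
      have hs2 := side2 hchord
      by_contra hnot
      exact hgap (by rw [← hs1, ← hs2]; exact hpar.2 hnot)
  · rintro z hz
    rw [Set.mem_union, Set.mem_insert_iff, Set.mem_singleton_iff] at hz
    rcases hz with (rfl | rfl) | hpc
    · refine ⟨Or.inl ⟨i - 1, by rw [hii]⟩, i, i - 1, Sym2.eq_swap.symm, ?_, ?_⟩
      · simp only [interval, Set.mem_setOf_eq, sub_self, Fin.val_zero]
        omega
      · simp only [interval, Set.mem_setOf_eq]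
        rw [hm1]
        omega
    · have key := pos_add_one (a := i) (x := j) h2n
      refine ⟨Or.inl ⟨j, rfl⟩, j, j + 1, rfl, ?_, ?_⟩
      · show (j - i).val ≤ (j - i).val
        exact le_rfl
      · show ¬ ((j + 1 - i).val ≤ (j - i).val)
        rw [key]
        split_ifs <;> omega
    · obtain ⟨hzc, hrest⟩ := hpc
      obtain ⟨a, b, rfl, -, -, -⟩ := Gp.isChord _ hzc
      have hpar := parity hzc p hp
      have hs1 := side1 hzc
      have hs2 := side2 hzc
      have hgap : ¬(((i - 1) - a).val < (b - a).val ↔ (j - a).val < (b - a).val) := by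
        intro hiff
        exact (hpar.1 (by rw [hs1, hs2]; exact hiff)) ⟨hzc, hrest⟩
      have hone := (cut_gap hzc hJ).2 hgap
      rcases hone with ⟨haS, hbS⟩ | ⟨hbS, haS⟩
      · exact ⟨Or.inr hzc, a, b, rfl, haS, hbS⟩
      · exact ⟨Or.inr hzc, b, a, Sym2.eq_swap.symm, hbS, haS⟩
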